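/- For any even integer t ≥ 6 and any integer β ≥ 7, the polynomial R_t(x) is not divisible in ℚ[x] by any polynomial V(x) ∈ ℚ[x] that has at least two nonzero terms and such that every exponent occurring with nonzero coefficient in V is divisible by β. -/

import Mathlib

open Polynomial
/-- `R_t(x) = 2x^{2t+1} − 2x^{2t−1} + 2x^{2t−2} − x^{t+3} + x^{t+2} − 4x^{t+1} + 4x^t − x^{t−1}
+ x^{t−2} − 2x^3 + 2x^2 − 2`. -/
noncomputable def Rpoly (t : ℕ) : Polynomial ℚ :=
  C 2 * X ^ (2 * t + 1) - C 2 * X ^ (2 * t - 1) + C 2 * X ^ (2 * t - 2) - X ^ (t + 3)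
    + X ^ (t + 2) - C 4 * X ^ (t + 1) + C 4 * X ^ t - X ^ (t - 1) + X ^ (t - 2)
    - C 2 * X ^ 3 + C 2 * X ^ 2 - C 2


noncomputable def proj (β r : ℕ) (p : ℚ[X]) : ℚ[X] :=
  ⟨AddMonoidAlgebra.ofCoeff (p.toFinsupp.coeff.filter (fun n => n % β = r))⟩

lemma proj_coeff (β r : ℕ) (p : ℚ[X]) (n : ℕ) :
    (proj β r p).coeff n = if n % β = r then p.coeff n else 0 := by
  rw [proj, coeff_ofFinsupp, AddMonoidAlgebra.coeff_ofCoeff, Finsupp.filter_apply]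
  simp [coeff]

lemma proj_mul (β r : ℕ) (V q : ℚ[X]) (hV : ∀ k ∈ V.support, β ∣ k) :
    V * proj β r q = proj β r (V * q) := by
  ext n
  rw [proj_coeff, coeff_mul, coeff_mul]
  by_cases hn : n % β = r
  · rw [if_pos hn]
    apply Finset.sum_congr rfl
    intro x hx
    rw [proj_coeff]
    by_cases hc : V.coeff x.1 = 0
    · simp [hc]
    · obtain ⟨c, hcc⟩ := hV _ (mem_support_iff.mpr hc)
      have hx2 : x.1 + x.2 = n := Finset.HasAntidiagonal.mem_antidiagonal.mp hx
      have h2 : x.2 % β = r := by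
        rw [← hn, ← hx2, hcc, Nat.mul_add_mod]
      rw [if_pos h2]
  · rw [if_neg hn]
    apply Finset.sum_eq_zero
    intro x hx
    rw [proj_coeff]
    by_cases hc : V.coeff x.1 = 0
    · simp [hc]
    · obtain ⟨c, hcc⟩ := hV _ (mem_support_iff.mpr hc)
      have hx2 : x.1 + x.2 = n := Finset.HasAntidiagonal.mem_antidiagonal.mp hx
      have h2 : ¬ x.2 % β = r := by
        rw [← hx2, hcc, Nat.mul_add_mod] at hn; exact hn
      rw [if_neg h2, mul_zero]

lemma proj_dvd (β r : ℕ) (V p : ℚ[X]) (hV : ∀ k ∈ V.support, β ∣ k) (h : V ∣ p) :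
    V ∣ proj β r p := by
  obtain ⟨q, rfl⟩ := h
  rw [← proj_mul β r V q hV]
  exact Dvd.intro _ rfl

lemma proj_add (β r : ℕ) (p q : ℚ[X]) : proj β r (p + q) = proj β r p + proj β r q := by
  ext n; simp only [proj_coeff, coeff_add]; split <;> simp

lemma proj_sub (β r : ℕ) (p q : ℚ[X]) : proj β r (p - q) = proj β r p - proj β r q := by
  ext n; simp only [proj_coeff, coeff_sub]; split <;> simp

lemma proj_C_mul_X_pow (β r : ℕ) (c : ℚ) (k : ℕ) :
    proj β r (C c * X ^ k) = if k % β = r then C c * X ^ k else 0 := by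
  ext n
  rw [proj_coeff]
  by_cases hnk : n = k
  · subst hnk
    by_cases h : n % β = r <;> simp [h]
  · by_cases h : k % β = r <;> by_cases h2 : n % β = r <;>
      simp [h, h2, coeff_X_pow, hnk]


lemma card_le_one_of_dvd_monomial (V : ℚ[X]) (c : ℚ) (hc : c ≠ 0) (m : ℕ)
    (h : V ∣ C c * X ^ m) : V.support.card ≤ 1 := by
  obtain ⟨q, hq⟩ := h
  have hne : C c * X ^ m ≠ 0 := by
    intro h0
    apply hc
    have := congrArg (fun p => Polynomial.coeff p m) h0
    simpa using this
  have hV0 : V ≠ 0 := by rintro rfl; rw [zero_mul] at hq; exact hne hq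
  have hq0 : q ≠ 0 := by rintro rfl; rw [mul_zero] at hq; exact hne hq
  have hd : V.natDegree + q.natDegree = m := by
    rw [← natDegree_mul hV0 hq0, ← hq, natDegree_C_mul_X_pow m c hc]
  have htd : V.natTrailingDegree + q.natTrailingDegree = m := by
    rw [← natTrailingDegree_mul hV0 hq0, ← hq, C_mul_X_pow_eq_monomial,
      natTrailingDegree_monomial hc]
  have h1 := V.natTrailingDegree_le_natDegree
  have h2 := q.natTrailingDegree_le_natDegree
  have heq : V.natDegree = V.natTrailingDegree := by omega
  apply Finset.card_le_one.mpr
  intro a ha b hb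
  have := le_natDegree_of_mem_supp a ha
  have := le_natDegree_of_mem_supp b hb
  have := natTrailingDegree_le_of_mem_supp a ha
  have := natTrailingDegree_le_of_mem_supp b hb
  omega

lemma small_not_dvd {β c : ℤ} (hβ : 7 ≤ β) (h : β ∣ c) (h1 : c ≠ 0) (h2 : |c| ≤ 6) : False := by
  have h3 : β ∣ |c| := (dvd_abs β c).mpr h
  have := Int.le_of_dvd (abs_pos.mpr h1) h3
  omega

/-- refute `x % β = y % β` given `β ∣ u`, when `(y:ℤ) - x = m*u + c` with small nonzero `c`. -/
lemma cond_refute {β x y u : ℕ} (hβ : 7 ≤ β) (h : x % β = y % β) (hd : β ∣ u) (m c : ℤ)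
    (hc : (y : ℤ) - (x : ℤ) = m * (u : ℤ) + c) (h0 : c ≠ 0) (h6 : |c| ≤ 6) : False := by
  have hdvd : (β : ℤ) ∣ (y : ℤ) - (x : ℤ) := (Nat.ModEq.dvd h)
  have h2 : (β : ℤ) ∣ (u : ℤ) := Int.natCast_dvd_natCast.mpr hd
  have h3 : (β : ℤ) ∣ c := by
    have h4 := dvd_sub hdvd (h2.mul_left m)
    have h5 : (y : ℤ) - x - m * u = c := by rw [hc]; ring
    rwa [h5] at h4
  exact small_not_dvd (by exact_mod_cast hβ) h3 h0 h6

/-- refute `x % β = y % β` when `(y:ℤ) - x = ±u` and `¬ β ∣ u`. -/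
lemma cond_refute' {β x y u : ℕ} (h : x % β = y % β)
    (hc : (y : ℤ) - (x : ℤ) = (u : ℤ) ∨ (y : ℤ) - (x : ℤ) = -(u : ℤ)) (hd : ¬ β ∣ u) : False := by
  have hdvd : (β : ℤ) ∣ (y : ℤ) - (x : ℤ) := Nat.ModEq.dvd h
  apply hd
  rcases hc with hc | hc
  · exact_mod_cast hc ▸ hdvd
  · have : (β : ℤ) ∣ (u : ℤ) := by rw [hc] at hdvd; exact (dvd_neg).mp hdvd
    exact_mod_cast this

lemma proj_X_pow (β r k : ℕ) :
    proj β r ((X : ℚ[X]) ^ k) = if k % β = r then X ^ k else 0 := by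
  have := proj_C_mul_X_pow β r 1 k
  simpa using this

lemma proj_C_eq (β r : ℕ) (c : ℚ) :
    proj β r (C c) = if 0 % β = r then C c else 0 := by
  have := proj_C_mul_X_pow β r c 0
  rw [pow_zero, mul_one] at this; exact this

lemma Rpoly_eq (s : ℕ) : Rpoly (s + 6) =
    C 2 * X ^ (2*s+13) - C 2 * X ^ (2*s+11) + C 2 * X ^ (2*s+10) - X ^ (s+9)
      + X ^ (s+8) - C 4 * X ^ (s+7) + C 4 * X ^ (s+6) - X ^ (s+5) + X ^ (s+4)
      - C 2 * X ^ 3 + C 2 * X ^ 2 - C 2 := by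
  have e1 : 2*(s+6)+1 = 2*s+13 := by omega
  have e2 : 2*(s+6)-1 = 2*s+11 := by omega
  have e3 : 2*(s+6)-2 = 2*s+10 := by omega
  have e4 : s+6+3 = s+9 := by omega
  have e5 : s+6+2 = s+8 := by omega
  have e6 : s+6+1 = s+7 := by omega
  have e7 : s+6-1 = s+5 := by omega
  have e8 : s+6-2 = s+4 := by omega
  rw [Rpoly, e1, e2, e3, e4, e5, e6, e7, e8]

lemma proj_Rpoly (β : ℕ) (s : ℕ) (r : ℕ) : proj β r (Rpoly (s+6)) =
    (if (2*s+13) % β = r then C 2 * X ^ (2*s+13) else 0)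
      - (if (2*s+11) % β = r then C 2 * X ^ (2*s+11) else 0)
      + (if (2*s+10) % β = r then C 2 * X ^ (2*s+10) else 0)
      - (if (s+9) % β = r then X ^ (s+9) else 0)
      + (if (s+8) % β = r then X ^ (s+8) else 0)
      - (if (s+7) % β = r then C 4 * X ^ (s+7) else 0)
      + (if (s+6) % β = r then C 4 * X ^ (s+6) else 0)
      - (if (s+5) % β = r then X ^ (s+5) else 0)
      + (if (s+4) % β = r then X ^ (s+4) else 0)
      - (if 3 % β = r then C 2 * X ^ 3 else 0)
      + (if 2 % β = r then C 2 * X ^ 2 else 0)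
      - (if 0 % β = r then C 2 else 0) := by
  rw [Rpoly_eq, proj_sub, proj_add, proj_sub, proj_add, proj_sub, proj_add, proj_sub,
    proj_add, proj_sub, proj_add, proj_sub, proj_C_mul_X_pow, proj_C_mul_X_pow,
    proj_C_mul_X_pow, proj_X_pow, proj_X_pow, proj_C_mul_X_pow, proj_C_mul_X_pow,
    proj_X_pow, proj_X_pow, proj_C_mul_X_pow, proj_C_mul_X_pow, proj_C_eq]

/-- For even `t ≥ 6` and `β ≥ 7`, `R_t` is not divisible by any rational polynomial with at
least two nonzero terms all of whose exponents are divisible by `β`. -/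
theorem Rpoly_not_dvd_by_beta_lacunary (t : ℕ) (ht : 6 ≤ t) (hte : Even t) (β : ℕ)
    (hβ : 7 ≤ β) (V : Polynomial ℚ) (hV : 2 ≤ V.support.card)
    (hexp : ∀ k ∈ V.support, β ∣ k) :
    ¬ V ∣ Rpoly t := by
  intro hdvd
  obtain ⟨s, rfl⟩ : ∃ s, t = s + 6 := ⟨t - 6, by omega⟩
  have key : ∀ r, V ∣ proj β r (Rpoly (s+6)) := fun r => proj_dvd β r V _ hexp hdvd
  have contra : ∀ (c : ℚ), c ≠ 0 → ∀ m : ℕ, V ∣ C c * X ^ m → False := by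
    intro c hc m h
    have := card_le_one_of_dvd_monomial V c hc m h
    omega
  by_cases h6 : β ∣ s + 6
  · -- `β ∣ t` : then `V ∣ 4x^t - 2` and `V ∣ x^(t+2) + 2x^2`, hence `V ∣ 10 x^2`.
    have d1 : V ∣ C 4 * X ^ (s+6) - C 2 := by
      have hn1 : ¬ ((2*s+13) % β = (s+6) % β) :=
        fun h => cond_refute hβ h h6 (-1) (-1) (by push_cast; ring) (by norm_num) (by norm_num)
      have hn2 : ¬ ((2*s+11) % β = (s+6) % β) :=
        fun h => cond_refute hβ h h6 (-1) (1) (by push_cast; ring) (by norm_num) (by norm_num)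
      have hn3 : ¬ ((2*s+10) % β = (s+6) % β) :=
        fun h => cond_refute hβ h h6 (-1) (2) (by push_cast; ring) (by norm_num) (by norm_num)
      have hn4 : ¬ ((s+9) % β = (s+6) % β) :=
        fun h => cond_refute hβ h h6 (0) (-3) (by push_cast; ring) (by norm_num) (by norm_num)
      have hn5 : ¬ ((s+8) % β = (s+6) % β) :=
        fun h => cond_refute hβ h h6 (0) (-2) (by push_cast; ring) (by norm_num) (by norm_num)
      have hn6 : ¬ ((s+7) % β = (s+6) % β) :=
        fun h => cond_refute hβ h h6 (0) (-1) (by push_cast; ring) (by norm_num) (by norm_num)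
      have hn7 : ¬ ((s+5) % β = (s+6) % β) :=
        fun h => cond_refute hβ h h6 (0) (1) (by push_cast; ring) (by norm_num) (by norm_num)
      have hn8 : ¬ ((s+4) % β = (s+6) % β) :=
        fun h => cond_refute hβ h h6 (0) (2) (by push_cast; ring) (by norm_num) (by norm_num)
      have hn9 : ¬ ((3) % β = (s+6) % β) :=
        fun h => cond_refute hβ h h6 (1) (-3) (by push_cast; ring) (by norm_num) (by norm_num)
      have hn10 : ¬ ((2) % β = (s+6) % β) :=
        fun h => cond_refute hβ h h6 (1) (-2) (by push_cast; ring) (by norm_num) (by norm_num)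
      have hp : (0 : ℕ) % β = (s+6) % β := by
        rw [Nat.zero_mod, Nat.mod_eq_zero_of_dvd h6]
      have hk := key ((s+6) % β)
      rw [proj_Rpoly, if_neg hn1, if_neg hn2, if_neg hn3, if_neg hn4, if_neg hn5, if_neg hn6, if_neg hn7, if_neg hn8, if_neg hn9, if_neg hn10, if_pos rfl, if_pos hp] at hk
      simp only [sub_zero, add_zero, zero_add, zero_sub] at hk
      exact hk
    have d2 : V ∣ X ^ (s+8) + C 2 * X ^ 2 := by
      have hn1 : ¬ ((2*s+13) % β = (s+8) % β) :=
        fun h => cond_refute hβ h h6 (-1) (1) (by push_cast; ring) (by norm_num) (by norm_num)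
      have hn2 : ¬ ((2*s+11) % β = (s+8) % β) :=
        fun h => cond_refute hβ h h6 (-1) (3) (by push_cast; ring) (by norm_num) (by norm_num)
      have hn3 : ¬ ((2*s+10) % β = (s+8) % β) :=
        fun h => cond_refute hβ h h6 (-1) (4) (by push_cast; ring) (by norm_num) (by norm_num)
      have hn4 : ¬ ((s+9) % β = (s+8) % β) :=
        fun h => cond_refute hβ h h6 (0) (-1) (by push_cast; ring) (by norm_num) (by norm_num)
      have hn5 : ¬ ((s+7) % β = (s+8) % β) :=
        fun h => cond_refute hβ h h6 (0) (1) (by push_cast; ring) (by norm_num) (by norm_num)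
      have hn6 : ¬ ((s+6) % β = (s+8) % β) :=
        fun h => cond_refute hβ h h6 (0) (2) (by push_cast; ring) (by norm_num) (by norm_num)
      have hn7 : ¬ ((s+5) % β = (s+8) % β) :=
        fun h => cond_refute hβ h h6 (0) (3) (by push_cast; ring) (by norm_num) (by norm_num)
      have hn8 : ¬ ((s+4) % β = (s+8) % β) :=
        fun h => cond_refute hβ h h6 (0) (4) (by push_cast; ring) (by norm_num) (by norm_num)
      have hn9 : ¬ ((3) % β = (s+8) % β) :=
        fun h => cond_refute hβ h h6 (1) (-1) (by push_cast; ring) (by norm_num) (by norm_num)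
      have hn10 : ¬ ((0) % β = (s+8) % β) :=
        fun h => cond_refute hβ h h6 (1) (2) (by push_cast; ring) (by norm_num) (by norm_num)
      have hp : (2 : ℕ) % β = (s+8) % β := by
        have hd : β ∣ (s+8) - 2 := by
          have e : s+8-2 = s+6 := by omega
          rw [e]; exact h6
        exact (Nat.modEq_iff_dvd' (by omega)).mpr hd
      have hk := key ((s+8) % β)
      rw [proj_Rpoly, if_neg hn1, if_neg hn2, if_neg hn3, if_neg hn4, if_neg hn5, if_neg hn6, if_neg hn7, if_neg hn8, if_neg hn9, if_neg hn10, if_pos rfl, if_pos hp] at hk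
      simp only [sub_zero, add_zero, zero_add, zero_sub] at hk
      exact hk
    have d3 : V ∣ C 10 * X ^ 2 := by
      have h := dvd_sub (d2.mul_left (C 4)) (d1.mul_left (X ^ 2))
      have he : (C 4 * (X ^ (s+8) + C 2 * X ^ 2) - X ^ 2 * (C 4 * X ^ (s+6) - C 2) : ℚ[X])
          = C 10 * X ^ 2 := by
        simp only [map_ofNat]
        ring
      rwa [he] at h
    exact contra 10 (by norm_num) 2 d3
  · by_cases h5 : β ∣ s + 5
    · -- `β ∣ t - 1` : the class of `t + 3` is a singleton.
      have hn1 : ¬ ((2*s+13) % β = (s+9) % β) :=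
        fun h => cond_refute hβ h h5 (-1) (1) (by push_cast; ring) (by norm_num) (by norm_num)
      have hn2 : ¬ ((2*s+11) % β = (s+9) % β) :=
        fun h => cond_refute hβ h h5 (-1) (3) (by push_cast; ring) (by norm_num) (by norm_num)
      have hn3 : ¬ ((2*s+10) % β = (s+9) % β) :=
        fun h => cond_refute hβ h h5 (-1) (4) (by push_cast; ring) (by norm_num) (by norm_num)
      have hn4 : ¬ ((s+8) % β = (s+9) % β) :=
        fun h => cond_refute hβ h h5 (0) (1) (by push_cast; ring) (by norm_num) (by norm_num)
      have hn5 : ¬ ((s+7) % β = (s+9) % β) :=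
        fun h => cond_refute hβ h h5 (0) (2) (by push_cast; ring) (by norm_num) (by norm_num)
      have hn6 : ¬ ((s+6) % β = (s+9) % β) :=
        fun h => cond_refute hβ h h5 (0) (3) (by push_cast; ring) (by norm_num) (by norm_num)
      have hn7 : ¬ ((s+5) % β = (s+9) % β) :=
        fun h => cond_refute hβ h h5 (0) (4) (by push_cast; ring) (by norm_num) (by norm_num)
      have hn8 : ¬ ((s+4) % β = (s+9) % β) :=
        fun h => cond_refute hβ h h5 (0) (5) (by push_cast; ring) (by norm_num) (by norm_num)
      have hn9 : ¬ ((3) % β = (s+9) % β) :=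
        fun h => cond_refute hβ h h5 (1) (1) (by push_cast; ring) (by norm_num) (by norm_num)
      have hn10 : ¬ ((2) % β = (s+9) % β) :=
        fun h => cond_refute hβ h h5 (1) (2) (by push_cast; ring) (by norm_num) (by norm_num)
      have hn11 : ¬ ((0) % β = (s+9) % β) :=
        fun h => cond_refute hβ h h5 (1) (4) (by push_cast; ring) (by norm_num) (by norm_num)
      have hk := key ((s+9) % β)
      rw [proj_Rpoly, if_neg hn1, if_neg hn2, if_neg hn3, if_neg hn4, if_neg hn5, if_neg hn6, if_neg hn7, if_neg hn8, if_neg hn9, if_neg hn10, if_neg hn11, if_pos rfl] at hk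
      simp only [sub_zero, add_zero, zero_add, zero_sub] at hk
      refine contra (-1) (by norm_num) (s+9) ?_
      have he : C ((-1) : ℚ) * X ^ (s+9) = -X ^ (s+9) := by simp
      rw [he]
      exact hk
    · by_cases h4 : β ∣ s + 4
      · -- `β ∣ t - 2` : the class of `t - 1` is a singleton.
        have hn1 : ¬ ((2*s+13) % β = (s+5) % β) :=
          fun h => cond_refute hβ h h4 (-1) (-4) (by push_cast; ring) (by norm_num) (by norm_num)
        have hn2 : ¬ ((2*s+11) % β = (s+5) % β) :=
          fun h => cond_refute hβ h h4 (-1) (-2) (by push_cast; ring) (by norm_num) (by norm_num)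
        have hn3 : ¬ ((2*s+10) % β = (s+5) % β) :=
          fun h => cond_refute hβ h h4 (-1) (-1) (by push_cast; ring) (by norm_num) (by norm_num)
        have hn4 : ¬ ((s+9) % β = (s+5) % β) :=
          fun h => cond_refute hβ h h4 (0) (-4) (by push_cast; ring) (by norm_num) (by norm_num)
        have hn5 : ¬ ((s+8) % β = (s+5) % β) :=
          fun h => cond_refute hβ h h4 (0) (-3) (by push_cast; ring) (by norm_num) (by norm_num)
        have hn6 : ¬ ((s+7) % β = (s+5) % β) :=
          fun h => cond_refute hβ h h4 (0) (-2) (by push_cast; ring) (by norm_num) (by norm_num)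
        have hn7 : ¬ ((s+6) % β = (s+5) % β) :=
          fun h => cond_refute hβ h h4 (0) (-1) (by push_cast; ring) (by norm_num) (by norm_num)
        have hn8 : ¬ ((s+4) % β = (s+5) % β) :=
          fun h => cond_refute hβ h h4 (0) (1) (by push_cast; ring) (by norm_num) (by norm_num)
        have hn9 : ¬ ((3) % β = (s+5) % β) :=
          fun h => cond_refute hβ h h4 (1) (-2) (by push_cast; ring) (by norm_num) (by norm_num)
        have hn10 : ¬ ((2) % β = (s+5) % β) :=
          fun h => cond_refute hβ h h4 (1) (-1) (by push_cast; ring) (by norm_num) (by norm_num)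
        have hn11 : ¬ ((0) % β = (s+5) % β) :=
          fun h => cond_refute hβ h h4 (1) (1) (by push_cast; ring) (by norm_num) (by norm_num)
        have hk := key ((s+5) % β)
        rw [proj_Rpoly, if_neg hn1, if_neg hn2, if_neg hn3, if_neg hn4, if_neg hn5, if_neg hn6, if_neg hn7, if_neg hn8, if_neg hn9, if_neg hn10, if_neg hn11, if_pos rfl] at hk
        simp only [sub_zero, add_zero, zero_add, zero_sub] at hk
        refine contra (-1) (by norm_num) (s+5) ?_
        have he : C ((-1) : ℚ) * X ^ (s+5) = -X ^ (s+5) := by simp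
        rw [he]
        exact hk
      · by_cases h3 : β ∣ s + 3
        · -- `β ∣ t - 3` : the class of `t - 2` is a singleton.
          have hn1 : ¬ ((2*s+13) % β = (s+4) % β) :=
            fun h => cond_refute hβ h h3 (-1) (-6) (by push_cast; ring) (by norm_num) (by norm_num)
          have hn2 : ¬ ((2*s+11) % β = (s+4) % β) :=
            fun h => cond_refute hβ h h3 (-1) (-4) (by push_cast; ring) (by norm_num) (by norm_num)
          have hn3 : ¬ ((2*s+10) % β = (s+4) % β) :=
            fun h => cond_refute hβ h h3 (-1) (-3) (by push_cast; ring) (by norm_num) (by norm_num)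
          have hn4 : ¬ ((s+9) % β = (s+4) % β) :=
            fun h => cond_refute hβ h h3 (0) (-5) (by push_cast; ring) (by norm_num) (by norm_num)
          have hn5 : ¬ ((s+8) % β = (s+4) % β) :=
            fun h => cond_refute hβ h h3 (0) (-4) (by push_cast; ring) (by norm_num) (by norm_num)
          have hn6 : ¬ ((s+7) % β = (s+4) % β) :=
            fun h => cond_refute hβ h h3 (0) (-3) (by push_cast; ring) (by norm_num) (by norm_num)
          have hn7 : ¬ ((s+6) % β = (s+4) % β) :=
            fun h => cond_refute hβ h h3 (0) (-2) (by push_cast; ring) (by norm_num) (by norm_num)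
          have hn8 : ¬ ((s+5) % β = (s+4) % β) :=
            fun h => cond_refute hβ h h3 (0) (-1) (by push_cast; ring) (by norm_num) (by norm_num)
          have hn9 : ¬ ((3) % β = (s+4) % β) :=
            fun h => cond_refute hβ h h3 (1) (-2) (by push_cast; ring) (by norm_num) (by norm_num)
          have hn10 : ¬ ((2) % β = (s+4) % β) :=
            fun h => cond_refute hβ h h3 (1) (-1) (by push_cast; ring) (by norm_num) (by norm_num)
          have hn11 : ¬ ((0) % β = (s+4) % β) :=
            fun h => cond_refute hβ h h3 (1) (1) (by push_cast; ring) (by norm_num) (by norm_num)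
          have hk := key ((s+4) % β)
          rw [proj_Rpoly, if_neg hn1, if_neg hn2, if_neg hn3, if_neg hn4, if_neg hn5, if_neg hn6, if_neg hn7, if_neg hn8, if_neg hn9, if_neg hn10, if_neg hn11, if_pos rfl] at hk
          simp only [sub_zero, add_zero, zero_add, zero_sub] at hk
          refine contra 1 (by norm_num) (s+4) ?_
          have he : C (1 : ℚ) * X ^ (s+4) = X ^ (s+4) := by simp
          rw [he]
          exact hk
        · by_cases h7 : β ∣ s + 7
          · -- `β ∣ t + 1` : the class of `t - 1` is a singleton.
            have hn1 : ¬ ((2*s+13) % β = (s+5) % β) :=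
              fun h => cond_refute hβ h h7 (-1) (-1) (by push_cast; ring) (by norm_num) (by norm_num)
            have hn2 : ¬ ((2*s+11) % β = (s+5) % β) :=
              fun h => cond_refute hβ h h7 (-1) (1) (by push_cast; ring) (by norm_num) (by norm_num)
            have hn3 : ¬ ((2*s+10) % β = (s+5) % β) :=
              fun h => cond_refute hβ h h7 (-1) (2) (by push_cast; ring) (by norm_num) (by norm_num)
            have hn4 : ¬ ((s+9) % β = (s+5) % β) :=
              fun h => cond_refute hβ h h7 (0) (-4) (by push_cast; ring) (by norm_num) (by norm_num)
            have hn5 : ¬ ((s+8) % β = (s+5) % β) :=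
              fun h => cond_refute hβ h h7 (0) (-3) (by push_cast; ring) (by norm_num) (by norm_num)
            have hn6 : ¬ ((s+7) % β = (s+5) % β) :=
              fun h => cond_refute hβ h h7 (0) (-2) (by push_cast; ring) (by norm_num) (by norm_num)
            have hn7 : ¬ ((s+6) % β = (s+5) % β) :=
              fun h => cond_refute hβ h h7 (0) (-1) (by push_cast; ring) (by norm_num) (by norm_num)
            have hn8 : ¬ ((s+4) % β = (s+5) % β) :=
              fun h => cond_refute hβ h h7 (0) (1) (by push_cast; ring) (by norm_num) (by norm_num)
            have hn9 : ¬ ((3) % β = (s+5) % β) :=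
              fun h => cond_refute hβ h h7 (1) (-5) (by push_cast; ring) (by norm_num) (by norm_num)
            have hn10 : ¬ ((2) % β = (s+5) % β) :=
              fun h => cond_refute hβ h h7 (1) (-4) (by push_cast; ring) (by norm_num) (by norm_num)
            have hn11 : ¬ ((0) % β = (s+5) % β) :=
              fun h => cond_refute hβ h h7 (1) (-2) (by push_cast; ring) (by norm_num) (by norm_num)
            have hk := key ((s+5) % β)
            rw [proj_Rpoly, if_neg hn1, if_neg hn2, if_neg hn3, if_neg hn4, if_neg hn5, if_neg hn6, if_neg hn7, if_neg hn8, if_neg hn9, if_neg hn10, if_neg hn11, if_pos rfl] at hk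
            simp only [sub_zero, add_zero, zero_add, zero_sub] at hk
            refine contra (-1) (by norm_num) (s+5) ?_
            have he : C ((-1) : ℚ) * X ^ (s+5) = -X ^ (s+5) := by simp
            rw [he]
            exact hk
          · -- otherwise the class of `t` is a singleton.
            have hn1 : ¬ ((2*s+13) % β = (s+6) % β) :=
              fun h => cond_refute' h (u := s+7) (Or.inr (by push_cast; ring)) h7
            have hn2 : ¬ ((2*s+11) % β = (s+6) % β) :=
              fun h => cond_refute' h (u := s+5) (Or.inr (by push_cast; ring)) h5
            have hn3 : ¬ ((2*s+10) % β = (s+6) % β) :=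
              fun h => cond_refute' h (u := s+4) (Or.inr (by push_cast; ring)) h4
            have hn4 : ¬ ((s+9) % β = (s+6) % β) :=
              fun h => cond_refute hβ h (dvd_zero β) 0 (-3) (by push_cast; ring) (by norm_num) (by norm_num)
            have hn5 : ¬ ((s+8) % β = (s+6) % β) :=
              fun h => cond_refute hβ h (dvd_zero β) 0 (-2) (by push_cast; ring) (by norm_num) (by norm_num)
            have hn6 : ¬ ((s+7) % β = (s+6) % β) :=
              fun h => cond_refute hβ h (dvd_zero β) 0 (-1) (by push_cast; ring) (by norm_num) (by norm_num)
            have hn7 : ¬ ((s+5) % β = (s+6) % β) :=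
              fun h => cond_refute hβ h (dvd_zero β) 0 (1) (by push_cast; ring) (by norm_num) (by norm_num)
            have hn8 : ¬ ((s+4) % β = (s+6) % β) :=
              fun h => cond_refute hβ h (dvd_zero β) 0 (2) (by push_cast; ring) (by norm_num) (by norm_num)
            have hn9 : ¬ ((3 : ℕ) % β = (s+6) % β) :=
              fun h => cond_refute' h (u := s+3) (Or.inl (by push_cast; ring)) h3
            have hn10 : ¬ ((2 : ℕ) % β = (s+6) % β) :=
              fun h => cond_refute' h (u := s+4) (Or.inl (by push_cast; ring)) h4
            have hn11 : ¬ ((0 : ℕ) % β = (s+6) % β) :=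
              fun h => cond_refute' h (u := s+6) (Or.inl (by push_cast; ring)) h6
            have hk := key ((s+6) % β)
            rw [proj_Rpoly, if_neg hn1, if_neg hn2, if_neg hn3, if_neg hn4, if_neg hn5,
              if_neg hn6, if_neg hn7, if_neg hn8, if_neg hn9, if_neg hn10, if_neg hn11,
              if_pos rfl] at hk
            simp only [sub_zero, add_zero, zero_add, zero_sub] at hk
            exact contra 4 (by norm_num) (s+6) hk
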